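/- The outer automorphism group of a virtually cyclic group is finite. -/

import Mathlib

/-- The subgroup `Inn(G) ≤ Aut(G)` of inner automorphisms. -/
abbrev innAut (G : Type*) [Group G] : Subgroup (MulAut G) :=
  (MulAut.conj : G →* MulAut G).range

instance innAut_normal (G : Type*) [Group G] : (innAut G).Normal := by
  constructor
  rintro - ⟨g, rfl⟩ f
  refine ⟨f g, ?_⟩
  ext x
  simp [MulAut.conj_apply, map_mul, map_inv, mul_assoc]

/-- The outer automorphism group `Out(G) = Aut(G)/Inn(G)`. -/
abbrev OutAut (G : Type*) [Group G] := MulAut G ⧸ innAut G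

section AuxVC
open Subgroup

lemma aux_generator_eq {G : Type*} [Group G] {t a : G} (ht : orderOf t = 0)
    (h : Subgroup.zpowers a = Subgroup.zpowers t) : a = t ∨ a = t⁻¹ := by
  have hinj : Function.Injective fun n : ℤ => t ^ n :=
    injective_zpow_iff_not_isOfFinOrder.2 (orderOf_eq_zero_iff.1 ht)
  obtain ⟨j, hj⟩ : a ∈ Subgroup.zpowers t := h ▸ Subgroup.mem_zpowers a
  obtain ⟨k, hk⟩ : t ∈ Subgroup.zpowers a := h ▸ Subgroup.mem_zpowers t
  simp only at hj hk
  have : t ^ (j * k) = t ^ (1 : ℤ) := by rw [zpow_one, zpow_mul, hj, hk]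
  have hjk : j * k = 1 := hinj this
  rcases Int.eq_one_or_neg_one_of_mul_eq_one hjk with h1 | h1
  · left; rw [← hj, h1, zpow_one]
  · right; rw [← hj, h1]; simp

lemma aux_finite_of_subgroup {G : Type*} [Group G] (K : Subgroup G) [Finite K]
    [K.FiniteIndex] : Finite G :=
  Finite.of_equiv _ (Subgroup.groupEquivQuotientProdSubgroup (s := K)).symm

lemma aux_isCyclic_of_le {G : Type*} [Group G] {K N : Subgroup G} (h : K ≤ N)
    (hc : IsCyclic ↥N) : IsCyclic ↥K :=
  isCyclic_of_surjective _ (Subgroup.subgroupOfEquivOfLe h).surjective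

lemma aux_orderOf_eq_zero {G : Type*} [Group G] {u : G}
    (h : Infinite ↥(Subgroup.zpowers u)) : orderOf u = 0 := by
  rw [orderOf_eq_zero_iff]
  intro hfin
  haveI := (finite_zpowers.2 hfin).to_subtype
  exact not_finite ↥(Subgroup.zpowers u)

lemma aux_exists_zpowers {G : Type*} [Group G] {N : Subgroup G} (hc : IsCyclic ↥N) :
    ∃ t : G, N = Subgroup.zpowers t := by
  obtain ⟨g, hg⟩ := hc.exists_generator
  refine ⟨(g : G), le_antisymm ?_ (Subgroup.zpowers_le.2 g.2)⟩
  intro x hx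
  obtain ⟨k, hk⟩ := hg ⟨x, hx⟩
  exact ⟨k, by simpa using congrArg Subtype.val hk⟩

lemma aux_exists_char {G : Type*} [Group G] [Infinite G] (H : Subgroup G)
    (hc : IsCyclic ↥H) (hfin : H.FiniteIndex) :
    ∃ M : Subgroup G, M.Normal ∧ M.FiniteIndex ∧ IsCyclic ↥M ∧
      ∀ f : MulAut G, M.comap (f : G →* G) = M := by
  haveI := hfin
  set N := H.normalCore with hNdef
  haveI hNnorm : N.Normal := H.normalCore_normal
  haveI hNfi : N.FiniteIndex := inferInstance
  have hcN : IsCyclic ↥N := aux_isCyclic_of_le H.normalCore_le hc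
  haveI hNinf : Infinite ↥N := by
    by_contra h
    rw [not_infinite_iff_finite] at h
    haveI := h
    haveI := aux_finite_of_subgroup N
    exact not_finite G
  obtain ⟨t, htN⟩ := aux_exists_zpowers hcN
  have hordt : orderOf t = 0 := aux_orderOf_eq_zero (htN ▸ hNinf)
  set n := N.index with hn
  have hn0 : n ≠ 0 := hNfi.index_ne_zero
  set S : Set (Subgroup G) := {K | K.Normal ∧ K.index = n ∧ IsCyclic ↥K} with hS
  have hNS : N ∈ S := ⟨inferInstance, rfl, hcN⟩
  have htK : ∀ K ∈ S, t ^ n ∈ K := by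
    rintro K ⟨hKnorm, hKidx, -⟩
    haveI := hKnorm
    have := K.pow_index_mem t
    rwa [hKidx] at this
  set D := Subgroup.zpowers (t ^ n) with hD
  have hDK : ∀ K ∈ S, D ≤ K := fun K hK => Subgroup.zpowers_le.2 (htK K hK)
  have hDN : D ≤ N := hDK N hNS
  -- conjugates of t
  have hmapN : ∀ g : G, Subgroup.zpowers (g * t * g⁻¹) = Subgroup.zpowers t := by
    intro g
    have : Subgroup.map (MulAut.conj g : G →* G) N = N := by
      apply le_antisymm
      · rintro x ⟨y, hy, rfl⟩
        exact hNnorm.conj_mem y hy g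
      · intro x hx
        exact ⟨g⁻¹ * x * g, by simpa using hNnorm.conj_mem x hx g⁻¹, by
          simp [MulAut.conj_apply]; group⟩
    calc Subgroup.zpowers (g * t * g⁻¹) = Subgroup.map (MulAut.conj g : G →* G) (Subgroup.zpowers t) := by
          rw [MonoidHom.map_zpowers]; rfl
      _ = Subgroup.zpowers t := by rw [← htN, this, htN]
  have hconj : ∀ g : G, g * t * g⁻¹ = t ∨ g * t * g⁻¹ = t⁻¹ :=
    fun g => aux_generator_eq hordt (hmapN g)
  haveI hDnorm : D.Normal := by
    constructor
    rintro x ⟨k, rfl⟩ g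
    have : g * (t ^ n) ^ k * g⁻¹ = ((g * t * g⁻¹) ^ n) ^ k := by
      rw [conj_pow, conj_zpow]
    rw [this]
    rcases hconj g with h1 | h1 <;> rw [h1]
    · exact zpow_mem (Subgroup.mem_zpowers _) k
    · rw [inv_pow]
      exact zpow_mem (inv_mem (Subgroup.mem_zpowers _)) k
  -- G/D is finite
  haveI hGDfin : Finite (G ⧸ D) := by
    set φ := QuotientGroup.mk' D with hφ
    have htau : (φ t) ^ n = 1 := by
      rw [← map_pow]
      exact (QuotientGroup.eq_one_iff _).2 (Subgroup.mem_zpowers _)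
    have hford : IsOfFinOrder (φ t) :=
      isOfFinOrder_iff_pow_eq_one.2 ⟨n, Nat.pos_of_ne_zero hn0, htau⟩
    have hmapeq : Subgroup.map φ N = Subgroup.zpowers (φ t) := by
      rw [htN, MonoidHom.map_zpowers]
    haveI : Finite ↥(Subgroup.map φ N) := by
      rw [hmapeq]
      exact (finite_zpowers.2 hford).to_subtype
    haveI : (Subgroup.map φ N).FiniteIndex := by
      constructor
      have hcomap : Subgroup.comap φ (Subgroup.map φ N) = N := by
        rw [Subgroup.comap_map_eq, QuotientGroup.ker_mk', sup_of_le_left hDN]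
      have := Subgroup.index_comap_of_surjective (Subgroup.map φ N)
        (QuotientGroup.mk'_surjective D)
      rw [hcomap] at this
      rw [← this]
      exact hn0
    exact aux_finite_of_subgroup (Subgroup.map φ N)
  -- S is finite
  have hSfin : S.Finite := by
    have hinj : Set.InjOn (fun K => Subgroup.map (QuotientGroup.mk' D) K) S := by
      intro K1 h1 K2 h2 hmap
      have e : ∀ K ∈ S, Subgroup.comap (QuotientGroup.mk' D)
          (Subgroup.map (QuotientGroup.mk' D) K) = K := by
        intro K hK
        rw [Subgroup.comap_map_eq, QuotientGroup.ker_mk', sup_of_le_left (hDK K hK)]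
      rw [← e K1 h1, ← e K2 h2]
      simp only at hmap
      rw [hmap]
    exact Set.Finite.of_finite_image (Set.toFinite _) hinj
  -- closure of S under automorphisms
  have hSclosed : ∀ (f : MulAut G), ∀ K ∈ S, K.comap (f : G →* G) ∈ S := by
    rintro f K ⟨h1, h2, h3⟩
    refine ⟨⟨fun x hx g => ?_⟩, ?_, ?_⟩
    · simp only [Subgroup.mem_comap, map_mul, map_inv] at *
      exact h1.conj_mem _ hx _
    · rw [Subgroup.index_comap_of_surjective _ f.surjective, h2]
    · have : Subgroup.map (f.symm : G →* G) K = Subgroup.comap (f : G →* G) K := by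
        rw [Subgroup.map_equiv_eq_comap_symm, MulEquiv.symm_symm]
      rw [← this]
      exact isCyclic_of_surjective _ (f.symm.subgroupMap K).surjective
  -- the characteristic subgroup
  refine ⟨sInf S, ⟨fun x hx g => ?_⟩, ?_, aux_isCyclic_of_le (sInf_le hNS) hcN, ?_⟩
  · rw [Subgroup.mem_sInf] at *
    exact fun K hK => (hK.1).conj_mem x (hx K hK) g
  · rw [sInf_eq_iInf']
    haveI : Finite ↥S := hSfin.to_subtype
    exact Subgroup.finiteIndex_iInf fun K => ⟨K.2.2.1 ▸ hn0⟩
  · intro f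
    ext x
    simp only [Subgroup.mem_comap, Subgroup.mem_sInf]
    constructor
    · intro h K hK
      have := h _ (hSclosed f.symm K hK)
      simpa using this
    · intro h K hK
      exact h _ (hSclosed f K hK)

set_option maxHeartbeats 2000000 in
lemma aux_main {G : Type*} [Group G] (M : Subgroup G) [hMn : M.Normal] [hMfi : M.FiniteIndex]
    (hchar : ∀ f : MulAut G, M.comap (f : G →* G) = M)
    (u : G) (hu : M = Subgroup.zpowers u) (hord : orderOf u = 0) :
    Finite (MulAut G ⧸ innAut G) := by
  classical
  have hmem0 : ∀ (f : MulAut G), ∀ x ∈ M, f x ∈ M := by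
    intro f x hx
    have h2 : x ∈ M.comap (f : G →* G) := by rw [hchar f]; exact hx
    exact h2
  have hmem : ∀ (f : MulAut G) (x : G), f x ∈ M ↔ x ∈ M := by
    intro f x
    refine ⟨fun h => ?_, hmem0 f x⟩
    have h2 := hmem0 f.symm _ h
    simpa using h2
  have uM : u ∈ M := by rw [hu]; exact Subgroup.mem_zpowers u
  have hinj : Function.Injective fun n : ℤ => u ^ n :=
    injective_zpow_iff_not_isOfFinOrder.2 (orderOf_eq_zero_iff.1 hord)
  have hMcomm : ∀ x ∈ M, ∀ y ∈ M, x * y = y * x := by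
    intro x hx y hy
    obtain ⟨j, rfl⟩ : x ∈ Subgroup.zpowers u := hu ▸ hx
    obtain ⟨k, rfl⟩ : y ∈ Subgroup.zpowers u := hu ▸ hy
    exact ((Commute.refl u).zpow_zpow j k).eq
  have hMtf : ∀ x ∈ M, ∀ m : ℕ, m ≠ 0 → x ^ m = 1 → x = 1 := by
    intro x hx m hm hxm
    obtain ⟨k, rfl⟩ : x ∈ Subgroup.zpowers u := hu ▸ hx
    simp only at hxm ⊢
    have : u ^ (k * m) = u ^ (0 : ℤ) := by
      rw [zpow_mul, zpow_zero]
      simpa using hxm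
    have hk : k * (m : ℤ) = 0 := hinj this
    rcases mul_eq_zero.1 hk with h | h
    · rw [h, zpow_zero]
    · exact absurd (by exact_mod_cast h) hm
  -- the subgroup B
  set B : Subgroup (MulAut G) :=
    { carrier := {f : MulAut G | (∀ x ∈ M, f x = x) ∧ ∀ g : G, g⁻¹ * f g ∈ M}
      one_mem' := ⟨fun x _ => rfl, fun g => by simpa using M.one_mem⟩
      mul_mem' := by
        rintro f f' ⟨hf1, hf2⟩ ⟨hf'1, hf'2⟩
        constructor
        · intro x hx; show f (f' x) = x; rw [hf'1 x hx, hf1 x hx]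
        · intro g
          show g⁻¹ * f (f' g) ∈ M
          have h1 : f' g = g * (g⁻¹ * f' g) := by group
          rw [h1, map_mul, hf1 _ (hf'2 g)]
          have h2 : g⁻¹ * (f g * (g⁻¹ * f' g)) = (g⁻¹ * f g) * (g⁻¹ * f' g) := by group
          rw [h2]
          exact M.mul_mem (hf2 g) (hf'2 g)
      inv_mem' := by
        rintro f ⟨hf1, hf2⟩
        constructor
        · intro x hx
          show f.symm x = x
          apply f.injective
          rw [f.apply_symm_apply, hf1 x hx]
        · intro g
          show g⁻¹ * f.symm g ∈ M
          rw [← hmem f, map_mul, map_inv, f.apply_symm_apply]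
          simpa using M.inv_mem (hf2 g) } with hBdef
  have hB1 : ∀ f : MulAut G, f ∈ B → ∀ x ∈ M, f x = x := fun f hf => hf.1
  have hB2 : ∀ f : MulAut G, f ∈ B → ∀ g : G, g⁻¹ * f g ∈ M := fun f hf => hf.2
  -- iterates
  have hpow : ∀ (f : MulAut G), f ∈ B → ∀ (k : ℕ) (g : G),
      (f ^ k) g = g * (g⁻¹ * f g) ^ k := by
    intro f hf k
    induction k with
    | zero => intro g; simp
    | succ k ih =>
      intro g
      have hstep : f ^ (k + 1) = f * f ^ k := by rw [← pow_succ']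
      rw [hstep]
      show f ((f ^ k) g) = _
      rw [ih g, map_mul, hB1 f hf _ (pow_mem (hB2 f hf g) k)]
      have hgc : g * (g⁻¹ * f g) = f g := by group
      rw [pow_succ', ← mul_assoc, hgc]
  -- the quotient
  set Q := G ⧸ M with hQ
  haveI : Fintype Q := Fintype.ofFinite Q
  set n := Fintype.card Q with hn
  have hn0 : n ≠ 0 := Fintype.card_ne_zero
  -- commutative group structure on M
  letI : CommGroup ↥M :=
    { (inferInstance : Group ↥M) with
      mul_comm := fun a b => Subtype.ext (hMcomm ↑a a.2 ↑b b.2) }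
  -- coset independence of the cocycle
  have hceq : ∀ (f : MulAut G), f ∈ B → ∀ a b : G, a⁻¹ * b ∈ M →
      a⁻¹ * f a = b⁻¹ * f b := by
    intro f hf a b hab
    have hb : b = a * (a⁻¹ * b) := by group
    set m := a⁻¹ * b with hm
    have key : b⁻¹ * f b = m⁻¹ * ((a⁻¹ * f a) * m) := by
      conv_lhs => rw [hb]
      rw [map_mul, hB1 f hf m hab]
      group
    rw [key, hMcomm _ (hB2 f hf a) _ hab, inv_mul_cancel_left]
  -- the cocycle with values in M
  set cfun : ↥B → Q → ↥M := fun f q =>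
    ⟨(Quotient.out q)⁻¹ * (f : MulAut G) (Quotient.out q), hB2 _ f.2 _⟩ with hcfun
  have hcfun_mk : ∀ (f : ↥B) (g : G),
      ((cfun f (QuotientGroup.mk g) : ↥M) : G) = g⁻¹ * (f : MulAut G) g := by
    intro f g
    apply hceq _ f.2
    rw [← QuotientGroup.eq]
    exact QuotientGroup.out_eq' _
  have hcfun_mul : ∀ (f f' : ↥B) (q : Q), cfun (f * f') q = cfun f q * cfun f' q := by
    intro f f' q
    apply Subtype.ext
    set a := Quotient.out q with ha
    show a⁻¹ * (f : MulAut G) ((f' : MulAut G) a) =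
      (a⁻¹ * (f : MulAut G) a) * (a⁻¹ * (f' : MulAut G) a)
    have h1 : (f' : MulAut G) a = a * (a⁻¹ * (f' : MulAut G) a) := by group
    rw [h1, map_mul, hB1 _ f.2 _ (hB2 _ f'.2 a)]
    group
  -- the transfer-like homomorphism
  set z : ↥B →* ↥M := MonoidHom.mk' (fun f => ∏ q : Q, cfun f q)
    (by
      intro f f'
      rw [← Finset.prod_mul_distrib]
      exact Finset.prod_congr rfl fun q _ => hcfun_mul f f' q) with hz
  -- conjugation as a homomorphism of M
  set conjM : G → ↥M →* ↥M := fun g => MonoidHom.mk'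
    (fun x => ⟨g⁻¹ * (x : G) * g, by simpa using hMn.conj_mem (x : G) x.2 g⁻¹⟩)
    (by
      intro a b
      apply Subtype.ext
      show g⁻¹ * (↑a * ↑b) * g = (g⁻¹ * ↑a * g) * (g⁻¹ * ↑b * g)
      group) with hconjM
  -- the key cocycle-sum identity
  have hkey : ∀ (f : ↥B) (g : G),
      z f = conjM g (z f) * (⟨g⁻¹ * (f : MulAut G) g, hB2 _ f.2 g⟩ : ↥M) ^ n := by
    intro f g
    set cg : ↥M := ⟨g⁻¹ * (f : MulAut G) g, hB2 _ f.2 g⟩ with hcg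
    have stepB : ∀ q : Q, cfun f (q * QuotientGroup.mk g) = conjM g (cfun f q) * cg := by
      intro q
      apply Subtype.ext
      set a := Quotient.out q with ha
      have h1 : ((cfun f (q * QuotientGroup.mk g) : ↥M) : G) =
          (a * g)⁻¹ * (f : MulAut G) (a * g) := by
        have : (q * QuotientGroup.mk g : Q) = QuotientGroup.mk (a * g) := by
          rw [← QuotientGroup.out_eq' q]
          rfl
        rw [this, hcfun_mk]
      rw [h1]
      show (a * g)⁻¹ * (f : MulAut G) (a * g) =
        (g⁻¹ * (a⁻¹ * (f : MulAut G) a) * g) * (g⁻¹ * (f : MulAut G) g)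
      rw [map_mul]
      group
    calc z f = ∏ q : Q, cfun f q := rfl
      _ = ∏ q : Q, cfun f (q * QuotientGroup.mk g) :=
          (Fintype.prod_equiv (Equiv.mulRight (QuotientGroup.mk g : Q)) _ _
            (fun q => rfl)).symm
      _ = ∏ q : Q, (conjM g (cfun f q) * cg) := Finset.prod_congr rfl fun q _ => stepB q
      _ = (∏ q : Q, conjM g (cfun f q)) * cg ^ n := by
          rw [Finset.prod_mul_distrib, Finset.prod_const, Finset.card_univ]
      _ = conjM g (z f) * cg ^ n := by rw [← map_prod]; rfl
  -- hence f ^ n is inner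
  have hpowconj : ∀ f : ↥B, (f : MulAut G) ^ n = MulAut.conj ((z f : G))⁻¹ := by
    intro f
    ext g
    rw [hpow _ f.2 n g]
    have h1 : (g⁻¹ * (f : MulAut G) g) ^ n =
        ((conjM g (z f))⁻¹ * z f : ↥M) := by
      have := hkey f g
      have h2 : (⟨g⁻¹ * (f : MulAut G) g, hB2 _ f.2 g⟩ : ↥M) ^ n =
          (conjM g (z f))⁻¹ * z f := by
        exact eq_inv_mul_iff_mul_eq.2 this.symm
      calc (g⁻¹ * (f : MulAut G) g) ^ n
          = ((⟨g⁻¹ * (f : MulAut G) g, hB2 _ f.2 g⟩ : ↥M) ^ n : ↥M) := by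
            rw [SubmonoidClass.coe_pow]
        _ = ((conjM g (z f))⁻¹ * z f : ↥M) := by rw [h2]
    rw [h1]
    show g * ((g⁻¹ * (z f : G) * g)⁻¹ * (z f : G)) = (z f : G)⁻¹ * g * ((z f : G)⁻¹)⁻¹
    group
  -- injectivity of z
  have hzinj : Function.Injective z := by
    rw [injective_iff_map_eq_one]
    intro f hf
    have h1 : (f : MulAut G) ^ n = 1 := by
      rw [hpowconj f, hf]
      show MulAut.conj ((1 : ↥M) : G)⁻¹ = 1
      simp
    have h2 : ∀ g : G, (f : MulAut G) g = g := by
      intro g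
      have h3 := hpow _ f.2 n g
      rw [h1] at h3
      have h4 : (g⁻¹ * (f : MulAut G) g) ^ n = 1 := by
        have : g * (g⁻¹ * (f : MulAut G) g) ^ n = g * 1 := by
          rw [← h3, mul_one]; rfl
        exact mul_left_cancel this
      have h5 := hMtf _ (hB2 _ f.2 g) n hn0 h4
      calc (f : MulAut G) g = g * (g⁻¹ * (f : MulAut G) g) := by group
        _ = g := by rw [h5, mul_one]
    apply Subtype.ext
    ext g
    exact h2 g
  -- B is cyclic
  haveI hcycM : IsCyclic ↥M := by
    constructor
    refine ⟨⟨u, uM⟩, fun x => ?_⟩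
    obtain ⟨k, hk⟩ : (x : G) ∈ Subgroup.zpowers u := hu ▸ x.2
    exact ⟨k, Subtype.ext (by simpa using hk)⟩
  have hcycB : IsCyclic ↥B :=
    isCyclic_of_surjective _ (MonoidHom.ofInjective hzinj).symm.surjective
  -- the quotient by B is finite
  haveI hXfin : Finite ↥({u, u⁻¹} : Set G) := (Set.toFinite _).to_subtype
  have hgenX : ∀ f : MulAut G, f u ∈ ({u, u⁻¹} : Set G) := by
    intro f
    have hmapM : Subgroup.map (f : G →* G) M = M := by
      rw [Subgroup.map_equiv_eq_comap_symm]
      exact hchar f.symm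
    have hzp : Subgroup.zpowers (f u) = Subgroup.zpowers u := by
      have h1 : Subgroup.map (f : G →* G) (Subgroup.zpowers u) = Subgroup.zpowers (f u) := by
        rw [MonoidHom.map_zpowers]
        rfl
      rw [← h1, ← hu, hmapM, hu]
    rcases aux_generator_eq hord hzp with h | h <;> simp [h]
  set χ : MulAut G → ↥({u, u⁻¹} : Set G) × (Q → Q) := fun f =>
    (⟨f u, hgenX f⟩, fun q => QuotientGroup.mk (f (Quotient.out q))) with hχ
  have hresp : ∀ a b : MulAut G, (QuotientGroup.leftRel B) a b → χ a = χ b := by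
    intro a b hab
    rw [QuotientGroup.leftRel_apply] at hab
    have hba : ∀ x, b x = a ((a⁻¹ * b : MulAut G) x) := by
      intro x
      have : a * (a⁻¹ * b) = b := by group
      conv_lhs => rw [← this]
      rfl
    have h1 := hB1 _ hab
    have h2 := hB2 _ hab
    apply Prod.ext
    · apply Subtype.ext
      show a u = b u
      rw [hba u, h1 u uM]
    · funext q
      show (QuotientGroup.mk (a (Quotient.out q)) : Q) = QuotientGroup.mk (b (Quotient.out q))
      set o := Quotient.out q with ho
      have hbo : b o = a o * a (o⁻¹ * (a⁻¹ * b : MulAut G) o) := by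
        rw [← map_mul, mul_inv_cancel_left, ← hba o]
      rw [hbo, QuotientGroup.mk_mul_of_mem _ (hmem0 a _ (h2 o))]
  have hinjχ : ∀ a b : MulAut G, χ a = χ b → (QuotientGroup.leftRel B) a b := by
    intro a b h
    rw [QuotientGroup.leftRel_apply]
    have h1 : a u = b u := congrArg (fun p => (p.1 : G)) h
    have h2 : ∀ q : Q, (QuotientGroup.mk (a (Quotient.out q)) : Q)
        = QuotientGroup.mk (b (Quotient.out q)) := fun q => congrFun (congrArg Prod.snd h) q
    constructor
    · -- fixes M pointwise
      intro x hx
      obtain ⟨k, rfl⟩ : x ∈ Subgroup.zpowers u := hu ▸ hx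
      show a⁻¹ (b (u ^ k)) = u ^ k
      rw [map_zpow, ← h1, ← map_zpow]
      exact a.symm_apply_apply _
    · -- moves every element within its coset
      intro g
      show g⁻¹ * a⁻¹ (b g) ∈ M
      rw [← hmem a, map_mul, map_inv]
      have hsymm : a ((a⁻¹ : MulAut G) (b g)) = b g := a.apply_symm_apply _
      rw [hsymm]
      set q : Q := QuotientGroup.mk g with hq
      set o := Quotient.out q with ho
      have hm : o⁻¹ * g ∈ M := by
        rw [← QuotientGroup.eq]
        exact QuotientGroup.out_eq' q
      have hout : (a o)⁻¹ * b o ∈ M := QuotientGroup.eq.1 (h2 q)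
      have hg : g = o * (o⁻¹ * g) := by group
      have ham : a g = a o * a (o⁻¹ * g) := by
        conv_lhs => rw [hg]
        rw [map_mul]
      have hbm : b g = b o * b (o⁻¹ * g) := by
        conv_lhs => rw [hg]
        rw [map_mul]
      have hsplit : (a g)⁻¹ * b g =
          (a (o⁻¹ * g))⁻¹ * (((a o)⁻¹ * b o) * b (o⁻¹ * g)) := by
        rw [ham, hbm]
        group
      rw [hsplit]
      exact M.mul_mem (M.inv_mem (hmem0 a _ hm))
        (M.mul_mem hout (hmem0 b _ hm))
  haveI hBQfin : Finite (MulAut G ⧸ B) := by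
    refine Finite.of_injective (Quotient.lift χ ?_) ?_
    · intro a b hab
      exact hresp a b hab
    · rintro ⟨a⟩ ⟨b⟩ h
      exact Quotient.sound (hinjχ a b h)
  -- assembly
  set π := QuotientGroup.mk' (innAut G) with hπ
  set θ := π.comp B.subtype with hθ
  have hkerθ : θ.ker = (innAut G).subgroupOf B := by
    rw [hθ, ← MonoidHom.comap_ker, QuotientGroup.ker_mk']
    rfl
  -- range of θ is finite
  haveI hTfin : Finite ↥θ.range := by
    haveI : IsCyclic ↥θ.range := isCyclic_of_surjective _ θ.rangeRestrict_surjective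
    obtain ⟨τ, hτ⟩ := IsCyclic.exists_generator (α := ↥θ.range)
    have hτn : τ ^ n = 1 := by
      obtain ⟨f, hf⟩ := τ.2
      have hinner : (↑f : MulAut G) ^ n ∈ innAut G := by
        rw [hpowconj f]
        exact ⟨((z f : G))⁻¹, rfl⟩
      apply Subtype.ext
      show ((τ : MulAut G ⧸ innAut G) ^ n) = 1
      rw [← hf]
      show (π ((B.subtype) f)) ^ n = 1
      rw [← map_pow]
      exact (QuotientGroup.eq_one_iff _).2 hinner
    have hford : IsOfFinOrder τ :=
      isOfFinOrder_iff_pow_eq_one.2 ⟨n, Nat.pos_of_ne_zero hn0, hτn⟩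
    haveI : Finite ↥(Subgroup.zpowers τ) := (finite_zpowers.2 hford).to_subtype
    have htop : Subgroup.zpowers τ = ⊤ := by
      rw [eq_top_iff]
      exact fun x _ => hτ x
    rw [htop] at this
    exact Finite.of_equiv _ Subgroup.topEquiv.toEquiv
  -- finiteness of intermediate quotients
  haveI hfin1 : Finite (↥B ⧸ (innAut G).subgroupOf B) := by
    rw [← hkerθ]
    exact Finite.of_equiv _ (QuotientGroup.quotientKerEquivRange θ).symm.toEquiv
  haveI hfin2 : Finite (↥(B ⊔ innAut G) ⧸ (innAut G).subgroupOf (B ⊔ innAut G)) :=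
    Finite.of_equiv _ (QuotientGroup.quotientInfEquivProdNormalQuotient B (innAut G)).toEquiv
  -- index computations
  have hrel : (innAut G).relIndex (B ⊔ innAut G) ≠ 0 := by
    rw [Subgroup.relIndex]
    exact Subgroup.index_ne_zero_of_finite
  have hsupidx : (B ⊔ innAut G).index ≠ 0 := by
    haveI hBfi : B.FiniteIndex := Subgroup.finiteIndex_of_finite_quotient (H := B)
    have hdvd := Subgroup.index_dvd_of_le (le_sup_left : B ≤ B ⊔ innAut G)
    intro h0
    rw [h0] at hdvd
    exact hBfi.index_ne_zero (zero_dvd_iff.1 hdvd)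
  have hidx : (innAut G).index ≠ 0 := by
    rw [← Subgroup.relIndex_mul_index (le_sup_right : innAut G ≤ B ⊔ innAut G)]
    exact Nat.mul_ne_zero hrel hsupidx
  haveI : (innAut G).FiniteIndex := ⟨hidx⟩
  infer_instance

end AuxVC

/-- The outer automorphism group of a virtually cyclic group is finite. -/
theorem out_finite_of_virtually_cyclic (G : Type*) [Group G] (H : Subgroup G)
    (hc : IsCyclic ↥H) (hfin : H.FiniteIndex) :
    Finite (OutAut G) := by
  cases finite_or_infinite G with
  | inl h => exact Quotient.finite _
  | inr h =>
    obtain ⟨M, hMn, hMfi, hMc, hchar⟩ := aux_exists_char H hc hfin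
    haveI := hMn; haveI := hMfi
    haveI hMinf : Infinite ↥M := by
      by_contra hfin2
      rw [not_infinite_iff_finite] at hfin2
      haveI := hfin2
      haveI := aux_finite_of_subgroup M
      exact not_finite G
    obtain ⟨u, hu⟩ := aux_exists_zpowers hMc
    have hord : orderOf u = 0 := aux_orderOf_eq_zero (hu ▸ hMinf)
    exact aux_main M hchar u hu hord
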